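/- Let m ≥ 1, let p : Fin m → ℝ satisfy 0 ≤ p i ≤ 1 for all i and ∏_{i} (1 - p i) < 1, let η ∈ (0,1), let s ≥ 1 be a natural number, and let u : Fin m → EuclideanSpace ℝ (Fin d). Define the sequence e : ℕ → EuclideanSpace ℝ (Fin d) by e 0 = 0 and e (t+1) = Σ_{A ⊆ Fin m} w_p(A) · (if A = ∅ then e t else (1-η)^s • e t + ((1 - (1-η)^s)/|A|) • Σ_{i ∈ A} u i), where the sum ranges over all finite subsets A of Fin m. Then e t converges, as t → ∞, to (1/(1 - ∏_{i}(1 - p i))) • Σ_{i} p i · (1 + Σ_{j=2}^{m} (-1)^{j+1} (1/j) Σ_{S ⊆ Fin m \ {i}, |S| = j-1} ∏_{z ∈ S} p z) • u i. -/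

import Mathlib

open Finset

/-- Key combinatorial identity, proved via ∫₀¹. -/
lemma fedavg_aux_intid {ι : Type*} [DecidableEq ι] (B : Finset ι) (q : ι → ℝ) :
    ∑ S ∈ B.powerset, (∏ z ∈ S, q z) * (∏ z ∈ B \ S, (1 - q z)) / (S.card + 1)
      = ∑ S ∈ B.powerset, (-1 : ℝ) ^ S.card * (∏ z ∈ S, q z) / (S.card + 1) := by
  have hf : ∀ x : ℝ, ∏ z ∈ B, (x * q z + (1 - q z))
      = ∑ S ∈ B.powerset, ((∏ z ∈ S, q z) * (∏ z ∈ B \ S, (1 - q z))) * x ^ S.card := by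
    intro x
    rw [Finset.prod_add]
    refine Finset.sum_congr rfl fun S _ => ?_
    rw [Finset.prod_mul_distrib, Finset.prod_const]
    ring
  have hg : ∀ x : ℝ, ∏ z ∈ B, (1 - x * q z)
      = ∑ S ∈ B.powerset, ((-1 : ℝ) ^ S.card * ∏ z ∈ S, q z) * x ^ S.card := by
    intro x
    have : ∀ z ∈ B, (1 - x * q z) = (-x) * q z + 1 := fun z _ => by ring
    rw [Finset.prod_congr rfl this, Finset.prod_add]
    refine Finset.sum_congr rfl fun S _ => ?_
    rw [Finset.prod_mul_distrib, Finset.prod_const, Finset.prod_const_one]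
    ring
  have hint : ∀ c : ℝ, ∀ k : ℕ, ∫ x in (0:ℝ)..1, c * x ^ k = c / (k + 1) := by
    intro c k
    rw [intervalIntegral.integral_const_mul, integral_pow]
    norm_num
    exact (div_eq_mul_inv c _).symm
  have key : (∫ x in (0:ℝ)..1, ∏ z ∈ B, (x * q z + (1 - q z)))
      = ∫ x in (0:ℝ)..1, ∏ z ∈ B, (1 - x * q z) := by
    have h1 : ∀ x : ℝ, ∏ z ∈ B, (x * q z + (1 - q z)) = ∏ z ∈ B, (1 - (1 - x) * q z) := by
      intro x
      exact Finset.prod_congr rfl fun z _ => by ring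
    have h2 := intervalIntegral.integral_comp_sub_left
      (a := 0) (b := 1) (fun y => ∏ z ∈ B, (1 - y * q z)) 1
    simp only [h1]
    rw [h2]
    norm_num
  have hile : ∀ (c : ι → Finset ι → ℝ), ∀ S ∈ B.powerset, IntervalIntegrable
      (fun x : ℝ => ((∏ z ∈ S, q z) * (∏ z ∈ B \ S, (1 - q z))) * x ^ S.card)
      MeasureTheory.volume 0 1 := by
    intro _ S _
    exact (Continuous.intervalIntegrable (by continuity) _ _)
  have lhs : (∫ x in (0:ℝ)..1, ∏ z ∈ B, (x * q z + (1 - q z)))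
      = ∑ S ∈ B.powerset, (∏ z ∈ S, q z) * (∏ z ∈ B \ S, (1 - q z)) / (S.card + 1) := by
    rw [intervalIntegral.integral_congr (g := fun x => ∑ S ∈ B.powerset,
      ((∏ z ∈ S, q z) * (∏ z ∈ B \ S, (1 - q z))) * x ^ S.card) (fun x _ => hf x)]
    rw [intervalIntegral.integral_finset_sum (hile (fun _ _ => 0))]
    refine Finset.sum_congr rfl fun S _ => ?_
    rw [hint]
  have rhs : (∫ x in (0:ℝ)..1, ∏ z ∈ B, (1 - x * q z))
      = ∑ S ∈ B.powerset, (-1 : ℝ) ^ S.card * (∏ z ∈ S, q z) / (S.card + 1) := by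
    rw [intervalIntegral.integral_congr (g := fun x => ∑ S ∈ B.powerset,
      ((-1 : ℝ) ^ S.card * ∏ z ∈ S, q z) * x ^ S.card) (fun x _ => hg x)]
    rw [intervalIntegral.integral_finset_sum (fun S _ =>
      (Continuous.intervalIntegrable (by continuity) _ _))]
    refine Finset.sum_congr rfl fun S _ => ?_
    rw [hint]
  rw [← lhs, key, rhs]

lemma fedavg_aux_group {m : ℕ} (i : Fin m) (p : Fin m → ℝ) :
    ∑ S ∈ (univ.erase i).powerset, (-1 : ℝ) ^ S.card * (∏ z ∈ S, p z) / (S.card + 1)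
      = 1 + ∑ j ∈ Finset.Icc 2 m, (-1 : ℝ) ^ (j + 1) * (1 / (j : ℝ)) *
          ∑ S ∈ (Finset.univ.erase i).powerset.filter (fun S => S.card = j - 1),
            ∏ z ∈ S, p z := by
  have hcard : (univ.erase i).card = m - 1 := by
    rw [Finset.card_erase_of_mem (Finset.mem_univ i)]
    simp
  have hR : ∑ j ∈ Finset.Icc 2 m, (-1 : ℝ) ^ (j + 1) * (1 / (j : ℝ)) *
        ∑ S ∈ (Finset.univ.erase i).powerset.filter (fun S => S.card = j - 1),
          ∏ z ∈ S, p z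
      = ∑ S ∈ (univ.erase i).powerset,
          if S = ∅ then 0 else (-1 : ℝ) ^ S.card * (∏ z ∈ S, p z) / (S.card + 1) := by
    have step1 : ∀ j ∈ Finset.Icc 2 m, (-1 : ℝ) ^ (j + 1) * (1 / (j : ℝ)) *
        ∑ S ∈ (Finset.univ.erase i).powerset.filter (fun S => S.card = j - 1),
          ∏ z ∈ S, p z
        = ∑ S ∈ (univ.erase i).powerset,
            if j = S.card + 1 then (-1 : ℝ) ^ (j + 1) * (1 / (j : ℝ)) * ∏ z ∈ S, p z
            else 0 := by
      intro j hj
      rw [Finset.mul_sum, Finset.sum_filter]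
      refine Finset.sum_congr rfl fun S _ => ?_
      have : (S.card = j - 1) ↔ (j = S.card + 1) := by
        simp only [Finset.mem_Icc] at hj; omega
      exact if_congr this rfl rfl
    rw [Finset.sum_congr rfl step1, Finset.sum_comm]
    refine Finset.sum_congr rfl fun S hS => ?_
    rw [Finset.sum_ite_eq' (Finset.Icc 2 m) (S.card + 1)
      (fun j => (-1 : ℝ) ^ (j + 1) * (1 / (j : ℝ)) * ∏ z ∈ S, p z)]
    have hSle : S.card ≤ m - 1 := hcard ▸ Finset.card_le_card (Finset.mem_powerset.mp hS)
    by_cases hSe : S = ∅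
    · subst hSe
      simp
    · have h1 : 1 ≤ S.card := Finset.card_pos.mpr (Finset.nonempty_iff_ne_empty.mpr hSe)
      have hmem : S.card + 1 ∈ Finset.Icc 2 m := by
        simp only [Finset.mem_Icc]
        constructor
        · omega
        · have : 1 ≤ m := by omega
          omega
      rw [if_pos hmem, if_neg hSe]
      have : ((S.card : ℝ) + 1) ≠ 0 := by positivity
      push_cast
      rw [pow_add, pow_add]
      field_simp
  rw [hR]
  have split : ∀ S ∈ (univ.erase i).powerset,
      (-1 : ℝ) ^ S.card * (∏ z ∈ S, p z) / (S.card + 1)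
      = (if S = ∅ then (1:ℝ) else 0)
        + (if S = ∅ then 0 else (-1 : ℝ) ^ S.card * (∏ z ∈ S, p z) / (S.card + 1)) := by
    intro S _
    by_cases hSe : S = ∅
    · subst hSe; simp
    · rw [if_neg hSe, if_neg hSe, zero_add]
  rw [Finset.sum_congr rfl split, Finset.sum_add_distrib,
    Finset.sum_ite_eq' ((univ.erase i).powerset) (∅ : Finset (Fin m)) (fun _ => (1:ℝ)),
    if_pos (Finset.empty_mem_powerset _)]

lemma fedavg_aux_sum_w {m : ℕ} (p : Fin m → ℝ) :
    ∑ A : Finset (Fin m), ((∏ i ∈ A, p i) * ∏ i ∈ Aᶜ, (1 - p i)) = 1 := by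
  have h1 : ∀ A : Finset (Fin m), (Aᶜ : Finset (Fin m)) = univ \ A := fun A => by
    ext x; simp
  calc ∑ A : Finset (Fin m), ((∏ i ∈ A, p i) * ∏ i ∈ Aᶜ, (1 - p i))
      = ∑ A ∈ (univ : Finset (Fin m)).powerset,
          ((∏ i ∈ A, p i) * ∏ i ∈ univ \ A, (1 - p i)) := by
        rw [Finset.powerset_univ]
        exact Finset.sum_congr rfl fun A _ => by rw [h1]
    _ = ∏ i : Fin m, (p i + (1 - p i)) := (Finset.prod_add _ _ _).symm
    _ = 1 := by simp

lemma fedavg_aux_bij {m : ℕ} (p : Fin m → ℝ) (i : Fin m) :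
    ∑ A ∈ (univ : Finset (Finset (Fin m))).filter (fun A => i ∈ A),
        ((∏ z ∈ A, p z) * ∏ z ∈ Aᶜ, (1 - p z)) / (A.card : ℝ)
      = p i * ∑ S ∈ (univ.erase i).powerset,
          (∏ z ∈ S, p z) * (∏ z ∈ (univ.erase i) \ S, (1 - p z)) / (S.card + 1) := by
  rw [Finset.mul_sum]
  refine Finset.sum_nbij' (fun A => A.erase i) (fun S => insert i S) ?_ ?_ ?_ ?_ ?_
  · intro A hA
    simp only [Finset.mem_filter] at hA
    simp only [Finset.mem_powerset]
    intro x hx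
    simp only [Finset.mem_erase] at hx ⊢
    exact ⟨hx.1, Finset.mem_univ x⟩
  · intro S hS
    simp only [Finset.mem_filter]
    exact ⟨Finset.mem_univ _, Finset.mem_insert_self i S⟩
  · intro A hA
    simp only [Finset.mem_filter] at hA
    exact Finset.insert_erase hA.2
  · intro S hS
    simp only [Finset.mem_powerset] at hS
    refine Finset.erase_insert fun hiS => ?_
    have := hS hiS
    simp at this
  · intro A hA
    simp only [Finset.mem_filter] at hA
    have hiA : i ∈ A := hA.2
    have hprod : ∏ z ∈ A, p z = p i * ∏ z ∈ A.erase i, p z :=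
      (Finset.mul_prod_erase A p hiA).symm
    have hcompl : (Aᶜ : Finset (Fin m)) = (univ.erase i) \ (A.erase i) := by
      ext x
      simp only [Finset.mem_compl, Finset.mem_sdiff, Finset.mem_erase, Finset.mem_univ,
        and_true, true_and]
      constructor
      · intro hx
        exact ⟨fun h => hx (h ▸ hiA), fun h => hx h.2⟩
      · intro ⟨h1, h2⟩ hxA
        exact h2 ⟨h1, hxA⟩
    have hcard : ((A.erase i).card : ℝ) + 1 = (A.card : ℝ) := by
      have := Finset.card_erase_of_mem hiA
      have hpos : 1 ≤ A.card := Finset.card_pos.mpr ⟨i, hiA⟩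
      rw [this]
      push_cast [Nat.cast_sub hpos]
      ring
    rw [hprod, hcompl, ← hcard]
    ring

lemma fedavg_aux_swap {m : ℕ} {E : Type*} [AddCommMonoid E] [Module ℝ E]
    (g : Finset (Fin m) → ℝ) (u : Fin m → E) :
    ∑ A : Finset (Fin m), g A • ∑ i ∈ A, u i
      = ∑ i : Fin m, (∑ A ∈ (univ : Finset (Finset (Fin m))).filter (fun A => i ∈ A), g A) • u i := by
  simp_rw [Finset.smul_sum]
  have h1 : ∀ A : Finset (Fin m), ∑ i ∈ A, g A • u i
      = ∑ i : Fin m, if i ∈ A then g A • u i else 0 := by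
    intro A
    rw [← Finset.sum_filter, Finset.filter_univ_mem]
  rw [Finset.sum_congr rfl fun A _ => h1 A, Finset.sum_comm]
  refine Finset.sum_congr rfl fun i _ => ?_
  rw [Finset.sum_smul, Finset.sum_filter]

/-- FedAvg with non-uniform client participation probabilities converges in
expectation to a biased point (Proposition 1). -/
theorem fedavg_bias
    (m d : ℕ) (hm : 1 ≤ m) (p : Fin m → ℝ)
    (hp : ∀ i, 0 ≤ p i ∧ p i ≤ 1)
    (hprod : ∏ i, (1 - p i) < 1)
    (η : ℝ) (hη : 0 < η ∧ η < 1)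
    (s : ℕ) (hs : 1 ≤ s)
    (u : Fin m → EuclideanSpace ℝ (Fin d))
    (e : ℕ → EuclideanSpace ℝ (Fin d))
    (he0 : e 0 = 0)
    (herec : ∀ t, e (t + 1) =
      ∑ A : Finset (Fin m),
        ((∏ i ∈ A, p i) * ∏ i ∈ Aᶜ, (1 - p i)) •
          (if A = ∅ then e t
           else (1 - η) ^ s • e t
             + ((1 - (1 - η) ^ s) / (A.card : ℝ)) • ∑ i ∈ A, u i)) :
    Filter.Tendsto e Filter.atTop
      (nhds ((1 / (1 - ∏ i, (1 - p i))) •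
        ∑ i, (p i * (1 + ∑ j ∈ Finset.Icc 2 m,
          (-1 : ℝ) ^ (j + 1) * (1 / (j : ℝ)) *
            ∑ S ∈ (Finset.univ.erase i).powerset.filter (fun S => S.card = j - 1),
              ∏ z ∈ S, p z)) • u i)) := by
  set P0 : ℝ := ∏ i, (1 - p i) with hP0def
  set r : ℝ := (1 - η) ^ s with hrdef
  set w : Finset (Fin m) → ℝ := fun A => (∏ i ∈ A, p i) * ∏ i ∈ Aᶜ, (1 - p i) with hwdef
  set α : ℝ := P0 * (1 - r) + r with hαdef
  obtain ⟨T, hTdef⟩ : ∃ T : EuclideanSpace ℝ (Fin d), T = (1 / (1 - P0)) •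
        ∑ i, (p i * (1 + ∑ j ∈ Finset.Icc 2 m,
          (-1 : ℝ) ^ (j + 1) * (1 / (j : ℝ)) *
            ∑ S ∈ (Finset.univ.erase i).powerset.filter (fun S => S.card = j - 1),
              ∏ z ∈ S, p z)) • u i := ⟨_, rfl⟩
  rw [← hTdef]
  -- basic bounds
  have hr0 : 0 ≤ r := pow_nonneg (by linarith [hη.2]) s
  have hr1 : r < 1 := pow_lt_one₀ (by linarith [hη.2]) (by linarith [hη.1]) (by omega)
  have hP0nn : 0 ≤ P0 := Finset.prod_nonneg fun i _ => by linarith [(hp i).2]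
  have hP0lt : P0 < 1 := hprod
  have hα0 : 0 ≤ α := by
    have : 0 ≤ P0 * (1 - r) := mul_nonneg hP0nn (by linarith)
    simp only [hαdef]; linarith
  have h1mα : 1 - α = (1 - P0) * (1 - r) := by simp only [hαdef]; ring
  have hα1 : α < 1 := by
    have : 0 < (1 - P0) * (1 - r) := mul_pos (by linarith) (by linarith)
    linarith
  -- recursion in affine form
  have hrec2 : ∀ t, e (t + 1) = α • e t
      + ∑ A : Finset (Fin m), (w A * ((1 - r) / (A.card : ℝ))) • ∑ i ∈ A, u i := by
    intro t
    rw [herec t]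
    have hA : ∀ A : Finset (Fin m),
        w A • (if A = ∅ then e t else r • e t + ((1 - r) / (A.card : ℝ)) • ∑ i ∈ A, u i)
        = (w A * (if A = ∅ then 1 else r)) • e t
          + (w A * ((1 - r) / (A.card : ℝ))) • ∑ i ∈ A, u i := by
      intro A
      by_cases hAe : A = ∅
      · subst hAe
        simp
      · rw [if_neg hAe, if_neg hAe, smul_add, smul_smul, smul_smul]
    calc ∑ A : Finset (Fin m),
        w A • (if A = ∅ then e t else r • e t + ((1 - r) / (A.card : ℝ)) • ∑ i ∈ A, u i)
        = ∑ A : Finset (Fin m), ((w A * (if A = ∅ then 1 else r)) • e t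
          + (w A * ((1 - r) / (A.card : ℝ))) • ∑ i ∈ A, u i) :=
          Finset.sum_congr rfl fun A _ => hA A
      _ = (∑ A : Finset (Fin m), w A * (if A = ∅ then 1 else r)) • e t
          + ∑ A : Finset (Fin m), (w A * ((1 - r) / (A.card : ℝ))) • ∑ i ∈ A, u i := by
          rw [Finset.sum_add_distrib, Finset.sum_smul]
      _ = α • e t + ∑ A : Finset (Fin m), (w A * ((1 - r) / (A.card : ℝ))) • ∑ i ∈ A, u i := by
          congr 1
          have hco : ∀ A : Finset (Fin m), w A * (if A = ∅ then 1 else r)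
              = (if A = ∅ then w A * (1 - r) else 0) + w A * r := by
            intro A; split_ifs <;> ring
          rw [Finset.sum_congr rfl fun A _ => hco A, Finset.sum_add_distrib,
            Finset.sum_ite_eq' (univ : Finset (Finset (Fin m))) (∅ : Finset (Fin m))
              (fun A => w A * (1 - r)), if_pos (Finset.mem_univ _), ← Finset.sum_mul,
            fedavg_aux_sum_w p, one_mul]
          have hw0 : w (∅ : Finset (Fin m)) = P0 := by
            simp only [hwdef, Finset.prod_empty, one_mul, Finset.compl_empty, hP0def]
          rw [hw0, hαdef]
  -- the increment equals (1-α) • T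
  have hvT : (∑ A : Finset (Fin m), (w A * ((1 - r) / (A.card : ℝ))) • ∑ i ∈ A, u i)
      = (1 - α) • T := by
    have step1 : ∀ A : Finset (Fin m), w A * ((1 - r) / (A.card : ℝ))
        = (1 - r) * (w A / (A.card : ℝ)) := fun A => by ring
    calc (∑ A : Finset (Fin m), (w A * ((1 - r) / (A.card : ℝ))) • ∑ i ∈ A, u i)
        = ∑ A : Finset (Fin m), ((1 - r) * (w A / (A.card : ℝ))) • ∑ i ∈ A, u i := by
          exact Finset.sum_congr rfl fun A _ => by rw [step1]
      _ = (1 - r) • ∑ A : Finset (Fin m), (w A / (A.card : ℝ)) • ∑ i ∈ A, u i := by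
          rw [Finset.smul_sum]
          exact Finset.sum_congr rfl fun A _ => (mul_smul _ _ _)
      _ = (1 - r) • ∑ i : Fin m,
            (∑ A ∈ (univ : Finset (Finset (Fin m))).filter (fun A => i ∈ A),
              w A / (A.card : ℝ)) • u i := by
          rw [fedavg_aux_swap (fun A => w A / (A.card : ℝ)) u]
      _ = (1 - r) • ∑ i : Fin m, (p i * (1 + ∑ j ∈ Finset.Icc 2 m,
            (-1 : ℝ) ^ (j + 1) * (1 / (j : ℝ)) *
              ∑ S ∈ (Finset.univ.erase i).powerset.filter (fun S => S.card = j - 1),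
                ∏ z ∈ S, p z)) • u i := by
          congr 1
          refine Finset.sum_congr rfl fun i _ => ?_
          congr 1
          rw [hwdef]
          rw [fedavg_aux_bij p i, fedavg_aux_intid (univ.erase i) p, fedavg_aux_group i p]
      _ = (1 - α) • T := by
          have hne : (1 : ℝ) - P0 ≠ 0 := by linarith
          have hsc : (1 : ℝ) - r = ((1 - P0) * (1 - r)) * (1 / (1 - P0)) := by
            rw [mul_one_div, mul_comm (1 - P0) (1 - r), mul_div_assoc, div_self hne, mul_one]
          rw [hTdef, h1mα, smul_smul, ← hsc]
  -- closed form
  have hclosed : ∀ t, e t = T - α ^ t • T := by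
    intro t
    induction t with
    | zero => rw [he0, pow_zero, one_smul, sub_self]
    | succ t ih =>
      rw [hrec2 t, ih, hvT]
      rw [smul_sub, smul_smul, sub_smul, one_smul, pow_succ']
      abel
  -- conclude
  have hpow : Filter.Tendsto (fun t : ℕ => α ^ t) Filter.atTop (nhds 0) :=
    tendsto_pow_atTop_nhds_zero_of_abs_lt_one (abs_lt.mpr ⟨by linarith, hα1⟩)
  have h2 : Filter.Tendsto (fun t : ℕ => T - α ^ t • T) Filter.atTop (nhds (T - (0:ℝ) • T)) :=
    Filter.Tendsto.sub tendsto_const_nhds (hpow.smul_const T)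
  rw [zero_smul, sub_zero] at h2
  exact h2.congr fun t => (hclosed t).symm
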